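/- Let Ω ⊂ ℝ^(2n+1−k) be open, φ : Ω → ℝ^k continuous, and a ∈ Ω. Suppose there exist C > 0 and r > 0 such that |φ(m) − φ(a)| ≤ C·d_φ(m,a) for every m ∈ Ω with d_∞(i(m), i(a)) < r. Let ℓ ∈ {1,…,k} and let γ : [−δ,δ] → Ω be an integral curve of ∇^{φ_ℓ} = ∂_{η_ℓ} + φ_ℓ·∂_τ with γ(0) = a, where δ > 0 is small enough that the above bound applies at m = γ(s) for all s ∈ [−δ,δ]. Then d_φ(γ(s), a) ≤ max{1, C}·|s| for all s ∈ [−δ,δ]. -/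

import Mathlib

open scoped BigOperators
open MeasureTheory Filter Topology

noncomputable section

namespace HeisGraph

/-! ### Points of the Heisenberg group ℍⁿ, identified with ℝ^{2n+1} -/

/-- Index type for the coordinates of a point of ℍⁿ: `x`-coordinates, `y`-coordinates
and the vertical coordinate `t`. -/
abbrev HIdxT (n : ℕ) := Sum (Fin n) (Sum (Fin n) Unit)

/-- ℍⁿ as a Euclidean space (so that the Euclidean norm is available). -/
abbrev HP (n : ℕ) := EuclideanSpace ℝ (HIdxT n)

variable {n k : ℕ}

def xPart (p : HP n) (i : Fin n) : ℝ := p (Sum.inl i)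
def yPart (p : HP n) (i : Fin n) : ℝ := p (Sum.inr (Sum.inl i))
def tPart (p : HP n) : ℝ := p (Sum.inr (Sum.inr ()))

def mkH (x y : Fin n → ℝ) (t : ℝ) : HP n :=
  WithLp.toLp 2 (fun i => Sum.elim x (Sum.elim y (fun _ => t)) i)

/-- The Heisenberg group product on ℝ^{2n+1}. -/
def hMul (p q : HP n) : HP n :=
  mkH (fun i => xPart p i + xPart q i) (fun i => yPart p i + yPart q i)
    (tPart p + tPart q + (1 / 2) * ∑ i : Fin n, (xPart p i * yPart q i - xPart q i * yPart p i))

/-- The Heisenberg group inverse: `p⁻¹ = -p`. -/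
def hInv (p : HP n) : HP n := -p

/-- The intrinsic dilations of ℍⁿ. -/
def dilH (lam : ℝ) (p : HP n) : HP n :=
  mkH (fun i => lam * xPart p i) (fun i => lam * yPart p i) (lam ^ 2 * tPart p)

/-- The homogeneous norm `‖p‖_∞ = max { |(x,y)| , |t|^{1/2} }`. -/
def normH (p : HP n) : ℝ :=
  max (Real.sqrt (∑ i, xPart p i ^ 2 + ∑ i, yPart p i ^ 2)) (Real.sqrt |tPart p|)

/-- The homogeneous distance `d_∞(p,q) = ‖q⁻¹ · p‖_∞`. -/
def dInf (p q : HP n) : ℝ := normH (hMul (hInv q) p)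

/-! ### Points of 𝕄 ≅ ℝ^{2n+1-k}: coordinates (v_{k+1..n}, η_{1..k}, w_{k+1..n}, τ) -/

abbrev MIdxT (n k : ℕ) := Sum (Fin (n - k)) (Sum (Fin k) (Sum (Fin (n - k)) Unit))

abbrev MP (n k : ℕ) := EuclideanSpace ℝ (MIdxT n k)

def vPart (a : MP n k) (j : Fin (n - k)) : ℝ := a (Sum.inl j)
def etaPart (a : MP n k) (i : Fin k) : ℝ := a (Sum.inr (Sum.inl i))
def wPart (a : MP n k) (j : Fin (n - k)) : ℝ := a (Sum.inr (Sum.inr (Sum.inl j)))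
def tauPart (a : MP n k) : ℝ := a (Sum.inr (Sum.inr (Sum.inr ())))

def mkM (v : Fin (n - k) → ℝ) (η : Fin k → ℝ) (w : Fin (n - k) → ℝ) (τ : ℝ) : MP n k :=
  WithLp.toLp 2 (fun i => Sum.elim v (Sum.elim η (Sum.elim w (fun _ => τ))) i)

/-- The embedding `i : ℝ^{2n+1-k} → ℍⁿ` onto the subgroup 𝕄 (`k` zeros among the
`x`-coordinates first). -/
def iota (a : MP n k) : HP n :=
  mkH (fun i => if h : (i : ℕ) < k then 0 else vPart a ⟨(i : ℕ) - k, by have := i.isLt; omega⟩)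
    (fun i => if h : (i : ℕ) < k then etaPart a ⟨(i : ℕ), h⟩
      else wPart a ⟨(i : ℕ) - k, by have := i.isLt; omega⟩)
    (tauPart a)

/-- The embedding `j : ℝ^k → ℍⁿ` onto the horizontal subgroup ℍ. -/
def jmap (h : EuclideanSpace ℝ (Fin k)) : HP n :=
  mkH (fun i => if hi : (i : ℕ) < k then h ⟨(i : ℕ), hi⟩ else 0) (fun _ => 0) 0

/-- The projection `π_𝕄 : ℍⁿ → 𝕄` determined by the unique factorization `p = m·h`,
`m ∈ 𝕄`, `h ∈ ℍ` (written in the coordinates of `MP n k`). -/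
def piM (hk : k ≤ n) (p : HP n) : MP n k :=
  mkM (fun j => xPart p ⟨(j : ℕ) + k, by have := j.isLt; omega⟩)
    (fun i => yPart p ⟨(i : ℕ), lt_of_lt_of_le i.isLt hk⟩)
    (fun j => yPart p ⟨(j : ℕ) + k, by have := j.isLt; omega⟩)
    (tPart p + (1 / 2) * ∑ i : Fin k,
      xPart p ⟨(i : ℕ), lt_of_lt_of_le i.isLt hk⟩ * yPart p ⟨(i : ℕ), lt_of_lt_of_le i.isLt hk⟩)

/-- The unit vertical vector of `MP n k`. -/
def tauUnit : MP n k := mkM 0 0 0 1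

/-- The product `⋆` induced on ℝ^{2n+1-k} by the group structure of 𝕄. -/
def starMul (a b : MP n k) : MP n k :=
  a + b + ((1 / 2) * ∑ j : Fin (n - k), (vPart a j * wPart b j - vPart b j * wPart a j)) • tauUnit

/-- The dilations `δ_λ^⋆` induced on ℝ^{2n+1-k}. -/
def dilStar (lam : ℝ) (a : MP n k) : MP n k :=
  mkM (fun j => lam * vPart a j) (fun i => lam * etaPart a i) (fun j => lam * wPart a j)
    (lam ^ 2 * tauPart a)

/-- The homogeneous norm of 𝕄 read on `MP n k` (it equals `normH (iota a)`). -/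
def normM (a : MP n k) : ℝ :=
  max (Real.sqrt (∑ j, vPart a j ^ 2 + ∑ i, etaPart a i ^ 2 + ∑ j, wPart a j ^ 2))
    (Real.sqrt |tauPart a|)

/-- The graph map `Φ(a) = i(a) · j(φ(a))`. -/
def graphMap (φ : MP n k → EuclideanSpace ℝ (Fin k)) (a : MP n k) : HP n :=
  hMul (iota a) (jmap (φ a))

/-- The graph distance `d_φ(a,b) = ‖π_𝕄(Φ(b)⁻¹ · Φ(a))‖_∞`. -/
def dPhi (hk : k ≤ n) (φ : MP n k → EuclideanSpace ℝ (Fin k)) (a b : MP n k) : ℝ :=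
  normM (piM hk (hMul (hInv (graphMap φ b)) (graphMap φ a)))

/-- `L : ℝ^{2n+1-k} → ℝ^k` is ⋆-linear: a homomorphism for `⋆`, homogeneous of degree 1
for the dilations `δ_λ^⋆`. -/
def IsStarLinear (L : MP n k → EuclideanSpace ℝ (Fin k)) : Prop :=
  (∀ a b, L (starMul a b) = L a + L b) ∧ ∀ lam > (0 : ℝ), ∀ a, L (dilStar lam a) = lam • L a

/-! ### Horizontal coordinates, matrices, cubes -/

/-- Index type for the `2n-k` horizontal coordinates of `MP n k` (τ deleted). -/
abbrev HorIdx (n k : ℕ) := Sum (Fin (n - k)) (Sum (Fin k) (Fin (n - k)))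

/-- The projection `π` deleting the vertical coordinate τ. -/
def piHor (a : MP n k) : HorIdx n k → ℝ :=
  Sum.elim (fun j => vPart a j) (Sum.elim (fun i => etaPart a i) (fun j => wPart a j))

/-- The ⋆-linear map associated to a `k × (2n-k)` matrix: `L(a) = M · π(a)`. -/
def ofMatrix (M : Matrix (Fin k) (HorIdx n k) ℝ) (a : MP n k) : EuclideanSpace ℝ (Fin k) :=
  WithLp.toLp 2 (fun i => M.mulVec (piHor a) i)

/-- The open coordinate cube `I_r(a)`. -/
def cube (r : ℝ) (a : MP n k) : Set (MP n k) := {p | ∀ i, |p i - a i| < r}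

/-- The closed coordinate cube `cl(I_r(a))`. -/
def closedCube (r : ℝ) (a : MP n k) : Set (MP n k) := {p | ∀ i, |p i - a i| ≤ r}

/-! ### Intrinsic differentiability -/

/-- The quantitative condition expressing uniform intrinsic differentiability of `φ`
at `a₀` (relative to `Ω`) with intrinsic differential `L`:
`lim_{r→0} sup_{a,b ∈ I_r(a₀)∩Ω} |φ(b) - φ(a) - L(a⁻¹ ⋆ b)| / d_φ(b,a) = 0`. -/
def UIDcond (hk : k ≤ n) (Ω : Set (MP n k)) (φ : MP n k → EuclideanSpace ℝ (Fin k))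
    (a₀ : MP n k) (L : MP n k → EuclideanSpace ℝ (Fin k)) : Prop :=
  ∀ ε > (0 : ℝ), ∃ r > (0 : ℝ), ∀ a ∈ cube r a₀ ∩ Ω, ∀ b ∈ cube r a₀ ∩ Ω,
    ‖φ b - φ a - L (starMul (-a) b)‖ ≤ ε * dPhi hk φ b a

/-- `φ` is uniformly intrinsic differentiable at `a₀`. -/
def UIDAt (hk : k ≤ n) (Ω : Set (MP n k)) (φ : MP n k → EuclideanSpace ℝ (Fin k))
    (a₀ : MP n k) : Prop :=
  ∃ L, IsStarLinear L ∧ UIDcond hk Ω φ a₀ L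

/-- `φ` is uniformly intrinsic differentiable at `a₀` with intrinsic Jacobian matrix `M`. -/
def UIDAtWith (hk : k ≤ n) (Ω : Set (MP n k)) (φ : MP n k → EuclideanSpace ℝ (Fin k))
    (a₀ : MP n k) (M : Matrix (Fin k) (HorIdx n k) ℝ) : Prop :=
  UIDcond hk Ω φ a₀ (ofMatrix M)

/-- The condition expressing intrinsic differentiability of `φ` at `a₀` with intrinsic
differential `L`: `lim_{a→a₀} |φ(a) - φ(a₀) - L(a₀⁻¹ ⋆ a)| / d_φ(a,a₀) = 0`. -/
def IDcond (hk : k ≤ n) (Ω : Set (MP n k)) (φ : MP n k → EuclideanSpace ℝ (Fin k))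
    (a₀ : MP n k) (L : MP n k → EuclideanSpace ℝ (Fin k)) : Prop :=
  ∀ ε > (0 : ℝ), ∃ δ > (0 : ℝ), ∀ a ∈ Ω, ‖a - a₀‖ < δ →
    ‖φ a - φ a₀ - L (starMul (-a₀) a)‖ ≤ ε * dPhi hk φ a a₀

/-- `φ` is intrinsic differentiable at `a₀`. -/
def IDAt (hk : k ≤ n) (Ω : Set (MP n k)) (φ : MP n k → EuclideanSpace ℝ (Fin k))
    (a₀ : MP n k) : Prop :=
  ∃ L, IsStarLinear L ∧ IDcond hk Ω φ a₀ L

/-- `φ` is intrinsic differentiable at `a₀` with intrinsic Jacobian matrix `M`. -/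
def IDAtWith (hk : k ≤ n) (Ω : Set (MP n k)) (φ : MP n k → EuclideanSpace ℝ (Fin k))
    (a₀ : MP n k) (M : Matrix (Fin k) (HorIdx n k) ℝ) : Prop :=
  IDcond hk Ω φ a₀ (ofMatrix M)

/-! ### The vector fields `W_j^φ` -/

/-- The `2n-k` vector fields `W^φ` on `MP n k`:
`W_j^φ = ∂_{v_j} - (1/2) w_j ∂_τ`, `∇^{φ_i} = ∂_{η_i} + φ_i ∂_τ`,
`W^φ = ∂_{w_j} + (1/2) v_j ∂_τ`. -/
def Wfield (φ : MP n k → EuclideanSpace ℝ (Fin k)) (ℓ : HorIdx n k) (p : MP n k) : MP n k :=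
  match ℓ with
  | Sum.inl j => mkM (Pi.single j 1) 0 0 (-(1 / 2) * wPart p j)
  | Sum.inr (Sum.inl i) => mkM 0 (Pi.single i 1) 0 (φ p i)
  | Sum.inr (Sum.inr j) => mkM 0 0 (Pi.single j 1) ((1 / 2) * vPart p j)

/-- For `ψ` of class C¹ (Euclidean sense), the intrinsic Jacobian matrix
`J^ψψ(m) = [(W_ℓ^ψ ψ_i)(m)]_{i,ℓ}`. -/
def JC1 (ψ : MP n k → EuclideanSpace ℝ (Fin k)) (m : MP n k) :
    Matrix (Fin k) (HorIdx n k) ℝ :=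
  Matrix.of fun i ℓ => fderiv ℝ ψ m (Wfield ψ ℓ m) i

/-- `φ` has `∂^{φ_ℓ}`-derivative `D` at `a`: along every integral curve of `W_ℓ^φ`
through `a` the difference quotients of `φ` converge to `D`. -/
def HasWDerivAt (Ω : Set (MP n k)) (φ : MP n k → EuclideanSpace ℝ (Fin k)) (ℓ : HorIdx n k)
    (a : MP n k) (D : EuclideanSpace ℝ (Fin k)) : Prop :=
  ∀ δ > (0 : ℝ), ∀ γ : ℝ → MP n k, γ 0 = a →
    (∀ s ∈ Set.Ioo (-δ) δ, γ s ∈ Ω) →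
    (∀ s ∈ Set.Ioo (-δ) δ, HasDerivAt γ (Wfield φ ℓ (γ s)) s) →
    Tendsto (fun s : ℝ => s⁻¹ • (φ (γ s) - φ a)) (𝓝[≠] (0 : ℝ)) (𝓝 D)

/-- The little-½-Hölder condition on `Ω`. -/
def LittleHolder (Ω : Set (MP n k)) (φ : MP n k → EuclideanSpace ℝ (Fin k)) : Prop :=
  ∀ Ω' : Set (MP n k), IsOpen Ω' → IsCompact (closure Ω') → closure Ω' ⊆ Ω →
    ∀ ε > (0 : ℝ), ∃ r > (0 : ℝ), ∀ a ∈ Ω', ∀ b ∈ Ω', a ≠ b → ‖a - b‖ ≤ r →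
      ‖φ a - φ b‖ ≤ ε * Real.sqrt ‖a - b‖

/-! ### `C¹_ℍ` functions on ℍⁿ -/

/-- The horizontal vector fields `X_i`, `Y_i` of ℍⁿ. -/
def Zfield (i : Sum (Fin n) (Fin n)) (p : HP n) : HP n :=
  match i with
  | Sum.inl i => mkH (Pi.single i 1) 0 (-(1 / 2) * yPart p i)
  | Sum.inr i => mkH 0 (Pi.single i 1) ((1 / 2) * xPart p i)

/-- `f : U → ℝ^k` is of class `C¹_ℍ` with horizontal derivatives `Df`: `f` is continuous
on `U`, the `Df p i` are continuous on `U` and represent the distributional derivatives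
of `f` along the horizontal vector fields. -/
def C1H (U : Set (HP n)) (f : HP n → EuclideanSpace ℝ (Fin k))
    (Df : HP n → Sum (Fin n) (Fin n) → EuclideanSpace ℝ (Fin k)) : Prop :=
  ContinuousOn f U ∧ (∀ i, ContinuousOn (fun p => Df p i) U) ∧
    ∀ (i : Sum (Fin n) (Fin n)) (j : Fin k) (ψ : HP n → ℝ),
      ContDiff ℝ (⊤ : ℕ∞) ψ → HasCompactSupport ψ → tsupport ψ ⊆ U →
      (∫ p in U, f p j * fderiv ℝ ψ p (Zfield i p)) = -∫ p in U, Df p i j * ψ p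

/-! ### The quasi-distance ρ_φ -/

/-- The function `ρ_φ(a,b)`. -/
def rhoPhi (φ : MP n k → EuclideanSpace ℝ (Fin k)) (a b : MP n k) : ℝ :=
  max
    (Real.sqrt (∑ j, (vPart a j - vPart b j) ^ 2 + ∑ i, (etaPart a i - etaPart b i) ^ 2 +
      ∑ j, (wPart a j - wPart b j) ^ 2))
    (Real.sqrt |tauPart a - tauPart b +
      (1 / 2) * ∑ i, (φ a i + φ b i) * (etaPart b i - etaPart a i) +
      (1 / 2) * ∑ j, (vPart a j * wPart b j - vPart b j * wPart a j)|)

/-! ### Families of exponential maps -/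

/-- A family of exponential maps for `φ` near `a`, as in Definition 4.2 of the paper. -/
structure ExpFamily (Ω : Set (MP n k)) (φ : MP n k → EuclideanSpace ℝ (Fin k))
    (a : MP n k) where
  δ₁ : ℝ
  δ₂ : ℝ
  pos : 0 < δ₂
  lt : δ₂ < δ₁
  sub : closedCube δ₁ a ⊆ Ω
  E : HorIdx n k → ℝ → MP n k → MP n k
  ω : HorIdx n k → MP n k → EuclideanSpace ℝ (Fin k)
  maps : ∀ ℓ, ∀ s ∈ Set.Icc (-δ₂) δ₂, ∀ b ∈ closedCube δ₂ a, E ℓ s b ∈ closedCube δ₁ a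
  start : ∀ ℓ, ∀ b ∈ closedCube δ₂ a, E ℓ 0 b = b
  isIntegral : ∀ ℓ, ∀ b ∈ closedCube δ₂ a, ∀ s ∈ Set.Icc (-δ₂) δ₂,
    HasDerivAt (fun r => E ℓ r b) (Wfield φ ℓ (E ℓ s b)) s
  contOmega : ∀ ℓ (i : Fin k), ContinuousOn (fun b => ω ℓ b i) Ω
  chain : ∀ ℓ, ∀ b ∈ closedCube δ₂ a, ∀ s ∈ Set.Icc (-δ₂) δ₂, ∀ i : Fin k,
    φ (E ℓ s b) i - φ b i = ∫ r in (0 : ℝ)..s, ω ℓ (E ℓ r b) i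


variable {n k : ℕ}

lemma sum_fin_split {M : Type*} [AddCommMonoid M] (hk : k ≤ n) (g : Fin n → M)
    (A : Fin k → M) (B : Fin (n-k) → M)
    (h1 : ∀ (i : Fin n) (h : (i:ℕ) < k), g i = A ⟨i, h⟩)
    (h2 : ∀ (i : Fin n) (h : k ≤ (i:ℕ)), g i = B ⟨(i:ℕ)-k, by have := i.isLt; omega⟩) :
    ∑ i, g i = ∑ i, A i + ∑ j, B j := by
  rw [← Equiv.sum_comp (finSumFinEquiv.trans (finCongr (Nat.add_sub_cancel' hk))) g,
    Fintype.sum_sum_type]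
  congr 1
  · refine Finset.sum_congr rfl fun i _ => ?_
    have hv : ((finSumFinEquiv.trans (finCongr (Nat.add_sub_cancel' hk))) (Sum.inl i) : ℕ)
        = (i : ℕ) := by simp
    rw [h1 _ (by omega)]
    exact congrArg A (Fin.ext hv)
  · refine Finset.sum_congr rfl fun j _ => ?_
    have hv : ((finSumFinEquiv.trans (finCongr (Nat.add_sub_cancel' hk))) (Sum.inr j) : ℕ)
        = k + (j : ℕ) := by simp
    rw [h2 _ (by omega)]
    exact congrArg B (Fin.ext (by simp [hv]))

section coords
variable (φ : MP n k → EuclideanSpace ℝ (Fin k)) (c : MP n k)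

lemma xPart_graphMap_lt (i : Fin n) (h : (i:ℕ) < k) :
    xPart (graphMap φ c) i = φ c ⟨i, h⟩ := by
  simp [graphMap, hMul, iota, jmap, mkH, xPart, dif_pos h]

lemma xPart_graphMap_ge (i : Fin n) (h : k ≤ (i:ℕ)) :
    xPart (graphMap φ c) i = vPart c ⟨(i:ℕ)-k, by have := i.isLt; omega⟩ := by
  simp [graphMap, hMul, iota, jmap, mkH, xPart, dif_neg (not_lt.2 h)]

lemma yPart_graphMap_lt (i : Fin n) (h : (i:ℕ) < k) :
    yPart (graphMap φ c) i = etaPart c ⟨i, h⟩ := by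
  simp [graphMap, hMul, iota, jmap, mkH, yPart, dif_pos h]

lemma yPart_graphMap_ge (i : Fin n) (h : k ≤ (i:ℕ)) :
    yPart (graphMap φ c) i = wPart c ⟨(i:ℕ)-k, by have := i.isLt; omega⟩ := by
  simp [graphMap, hMul, iota, jmap, mkH, yPart, dif_neg (not_lt.2 h)]

lemma tPart_graphMap (hk : k ≤ n) :
    tPart (graphMap φ c) = tauPart c - (1/2) * ∑ i : Fin k, φ c i * etaPart c i := by
  simp only [graphMap, hMul, iota, jmap, mkH, xPart, yPart, tPart, tauPart,
    Sum.elim_inl, Sum.elim_inr]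
  rw [sum_fin_split hk _ (fun i : Fin k => (0:ℝ) * 0 - φ c i * etaPart c i) (fun _ => 0)
    (fun i h => by simp [dif_pos h]) (fun i h => by simp [dif_neg (not_lt.2 h)])]
  simp
  ring

end coords


section apps
variable (φ : MP n k → EuclideanSpace ℝ (Fin k)) (c : MP n k)

lemma graphMap_x_lt (i : Fin n) (h : (i:ℕ) < k) :
    graphMap φ c (Sum.inl i) = φ c ⟨i, h⟩ := xPart_graphMap_lt φ c i h

lemma graphMap_x_ge (i : Fin n) (h : k ≤ (i:ℕ)) :
    graphMap φ c (Sum.inl i) = vPart c ⟨(i:ℕ)-k, by have := i.isLt; omega⟩ :=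
  xPart_graphMap_ge φ c i h

lemma graphMap_y_lt (i : Fin n) (h : (i:ℕ) < k) :
    graphMap φ c (Sum.inr (Sum.inl i)) = etaPart c ⟨i, h⟩ := yPart_graphMap_lt φ c i h

lemma graphMap_y_ge (i : Fin n) (h : k ≤ (i:ℕ)) :
    graphMap φ c (Sum.inr (Sum.inl i)) = wPart c ⟨(i:ℕ)-k, by have := i.isLt; omega⟩ :=
  yPart_graphMap_ge φ c i h

lemma graphMap_t (hk : k ≤ n) :
    graphMap φ c (Sum.inr (Sum.inr ())) = tauPart c - (1/2) * ∑ i : Fin k, φ c i * etaPart c i :=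
  tPart_graphMap φ c hk

end apps

section piMcoords
variable (hk : k ≤ n) (φ : MP n k → EuclideanSpace ℝ (Fin k)) (a b : MP n k)

lemma vPart_piM (j : Fin (n-k)) :
    vPart (piM hk (hMul (hInv (graphMap φ a)) (graphMap φ b))) j = vPart b j - vPart a j := by
  have hidx : ∀ (h : (j:ℕ)+k-k < n - k), (⟨(j:ℕ)+k-k, h⟩ : Fin (n-k)) = j :=
    fun h => Fin.ext (by simp)
  simp only [piM, vPart, mkM, Sum.elim_inl, hMul, hInv, mkH, xPart, PiLp.neg_apply]
  rw [graphMap_x_ge φ a _ (by simp), graphMap_x_ge φ b _ (by simp), hidx]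
  simp only [vPart]; ring

lemma etaPart_piM (i : Fin k) :
    etaPart (piM hk (hMul (hInv (graphMap φ a)) (graphMap φ b))) i
      = etaPart b i - etaPart a i := by
  simp only [piM, etaPart, mkM, Sum.elim_inl, Sum.elim_inr, hMul, hInv, mkH, yPart,
    PiLp.neg_apply]
  rw [graphMap_y_lt φ a _ i.isLt, graphMap_y_lt φ b _ i.isLt]
  simp [etaPart]
  ring

lemma wPart_piM (j : Fin (n-k)) :
    wPart (piM hk (hMul (hInv (graphMap φ a)) (graphMap φ b))) j = wPart b j - wPart a j := by
  have hidx : ∀ (h : (j:ℕ)+k-k < n - k), (⟨(j:ℕ)+k-k, h⟩ : Fin (n-k)) = j :=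
    fun h => Fin.ext (by simp)
  simp only [piM, wPart, mkM, Sum.elim_inl, Sum.elim_inr, hMul, hInv, mkH, yPart,
    PiLp.neg_apply]
  rw [graphMap_y_ge φ a _ (by simp), graphMap_y_ge φ b _ (by simp), hidx]
  simp only [wPart]; ring

lemma tauPart_piM :
    tauPart (piM hk (hMul (hInv (graphMap φ a)) (graphMap φ b)))
      = tauPart b - tauPart a + ∑ i : Fin k, φ a i * (etaPart a i - etaPart b i)
        + (1/2) * ∑ j : Fin (n-k), (vPart b j * wPart a j - vPart a j * wPart b j) := by
  simp only [piM, tauPart, mkM, Sum.elim_inl, Sum.elim_inr, hMul, hInv, mkH, xPart, yPart,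
    tPart, PiLp.neg_apply]
  rw [graphMap_t φ a hk, graphMap_t φ b hk,
      sum_fin_split hk _ (fun i : Fin k => -(φ a i) * etaPart b i - φ b i * -(etaPart a i))
        (fun j => -(vPart a j) * wPart b j - vPart b j * -(wPart a j))
        (fun i h => by rw [graphMap_x_lt φ a i h, graphMap_x_lt φ b i h,
                           graphMap_y_lt φ a i h, graphMap_y_lt φ b i h])
        (fun i h => by rw [graphMap_x_ge φ a i h, graphMap_x_ge φ b i h,
                           graphMap_y_ge φ a i h, graphMap_y_ge φ b i h])]
  have hsum : ∑ x : Fin k,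
      (-graphMap φ a (Sum.inl ⟨(x:ℕ), lt_of_lt_of_le x.isLt hk⟩)
        + graphMap φ b (Sum.inl ⟨(x:ℕ), lt_of_lt_of_le x.isLt hk⟩)) *
      (-graphMap φ a (Sum.inr (Sum.inl ⟨(x:ℕ), lt_of_lt_of_le x.isLt hk⟩))
        + graphMap φ b (Sum.inr (Sum.inl ⟨(x:ℕ), lt_of_lt_of_le x.isLt hk⟩)))
      = ∑ x : Fin k, (-(φ a x) + φ b x) * (-(etaPart a x) + etaPart b x) := by
    refine Finset.sum_congr rfl fun x _ => ?_
    rw [graphMap_x_lt φ a _ x.isLt, graphMap_x_lt φ b _ x.isLt,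
        graphMap_y_lt φ a _ x.isLt, graphMap_y_lt φ b _ x.isLt]
  rw [hsum]
  have htau : ∀ c' : MP n k, tauPart c' = c' (Sum.inr (Sum.inr (Sum.inr ()))) := fun _ => rfl
  simp only [← htau, mul_sub, sub_mul, mul_add, add_mul, neg_mul, mul_neg, neg_neg,
    Finset.sum_sub_distrib, Finset.sum_add_distrib, Finset.sum_neg_distrib]
  ring

end piMcoords

lemma dPhi_curve (hk : k ≤ n) (φ : MP n k → EuclideanSpace ℝ (Fin k)) (a b : MP n k)
    (ℓ : Fin k) (s f0 : ℝ)
    (hv : ∀ j, vPart b j = vPart a j) (hw : ∀ j, wPart b j = wPart a j)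
    (hη : ∀ i, etaPart b i = etaPart a i + (if i = ℓ then s else 0))
    (hτ : tauPart b = tauPart a + φ a ℓ * s + f0) :
    dPhi hk φ b a = max |s| (Real.sqrt |f0|) := by
  unfold dPhi normM
  congr 1
  · have h1 : ∑ j, vPart (piM hk (hMul (hInv (graphMap φ a)) (graphMap φ b))) j ^ 2 = 0 := by
      refine Finset.sum_eq_zero fun j _ => ?_
      rw [vPart_piM, hv, sub_self]; ring
    have h3 : ∑ j, wPart (piM hk (hMul (hInv (graphMap φ a)) (graphMap φ b))) j ^ 2 = 0 := by
      refine Finset.sum_eq_zero fun j _ => ?_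
      rw [wPart_piM, hw, sub_self]; ring
    have h2 : ∑ i, etaPart (piM hk (hMul (hInv (graphMap φ a)) (graphMap φ b))) i ^ 2
        = s ^ 2 := by
      have : ∀ i : Fin k, etaPart (piM hk (hMul (hInv (graphMap φ a)) (graphMap φ b))) i ^ 2
          = if i = ℓ then s ^ 2 else 0 := by
        intro i
        rw [etaPart_piM, hη]
        by_cases h : i = ℓ <;> simp [h]
      rw [Finset.sum_congr rfl fun i _ => this i, Finset.sum_ite_eq' Finset.univ ℓ
        (fun _ => s ^ 2)]
      simp
    rw [h1, h2, h3]
    simp [Real.sqrt_sq_eq_abs]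
  · congr 1
    rw [tauPart_piM]
    have h4 : ∑ i : Fin k, φ a i * (etaPart a i - etaPart b i) = -(φ a ℓ * s) := by
      have : ∀ i : Fin k, φ a i * (etaPart a i - etaPart b i)
          = if i = ℓ then -(φ a ℓ * s) else 0 := by
        intro i
        rw [hη]
        by_cases h : i = ℓ
        · subst h; norm_num
        · simp [h]
      rw [Finset.sum_congr rfl fun i _ => this i, Finset.sum_ite_eq' Finset.univ ℓ
        (fun _ => -(φ a ℓ * s))]
      simp
    have h5 : ∑ j : Fin (n-k), (vPart b j * wPart a j - vPart a j * wPart b j) = 0 := by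
      refine Finset.sum_eq_zero fun j _ => ?_
      rw [hv, hw]; ring
    rw [h4, h5, hτ]
    ring_nf

/-- estimate (4.9) in the proof of Proposition 4.10: if
`|φ(m) - φ(a)| ≤ C·d_φ(m,a)` for `m` in a `d_∞`-ball around `a`, and `γ` is any
integral curve of `∇^{φ_ℓ}` with `γ(0) = a` staying in that ball, then
`d_φ(γ(s), a) ≤ max{1,C}·|s|`. -/
theorem statement18 (n k : ℕ) (hn : 1 ≤ n) (hk1 : 1 ≤ k) (hk : k ≤ n)
    (Ω : Set (MP n k)) (hΩ : IsOpen Ω)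
    (φ : MP n k → EuclideanSpace ℝ (Fin k)) (hφ : ContinuousOn φ Ω)
    (a : MP n k) (ha : a ∈ Ω)
    (C r : ℝ) (hC : 0 < C) (hr : 0 < r)
    (hbound : ∀ m ∈ Ω, dInf (iota m) (iota a) < r → ‖φ m - φ a‖ ≤ C * dPhi hk φ m a)
    (ℓ : Fin k) (δ : ℝ) (hδ : 0 < δ) (γ : ℝ → MP n k) (hγ0 : γ 0 = a)
    (hγΩ : ∀ s ∈ Set.Icc (-δ) δ, γ s ∈ Ω)
    (hγd : ∀ s ∈ Set.Icc (-δ) δ,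
      HasDerivAt γ (Wfield φ (Sum.inr (Sum.inl ℓ)) (γ s)) s)
    (hsmall : ∀ s ∈ Set.Icc (-δ) δ, dInf (iota (γ s)) (iota a) < r) :
    ∀ s ∈ Set.Icc (-δ) δ, dPhi hk φ (γ s) a ≤ max 1 C * |s| := by
  intro s hsI
  set I : Set ℝ := Set.Icc (-δ) δ with hI
  have h0I : (0:ℝ) ∈ I := ⟨by linarith, by linarith⟩
  -- coordinatewise derivatives of γ
  have hproj : ∀ (idx : MIdxT n k), ∀ t ∈ I, HasDerivAt (fun u => γ u idx)
      (Wfield φ (Sum.inr (Sum.inl ℓ)) (γ t) idx) t := by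
    intro idx t ht
    have h := (EuclideanSpace.proj (𝕜 := ℝ) idx).hasFDerivAt.comp_hasDerivAt t (hγd t ht)
    simp at h
    exact h
  -- coordinates of the vector field
  have hWv : ∀ p (j : Fin (n-k)), Wfield φ (Sum.inr (Sum.inl ℓ)) p (Sum.inl j) = 0 := by
    intro p j; simp [Wfield, mkM]
  have hWw : ∀ p (j : Fin (n-k)),
      Wfield φ (Sum.inr (Sum.inl ℓ)) p (Sum.inr (Sum.inr (Sum.inl j))) = 0 := by
    intro p j; simp [Wfield, mkM]
  have hWη : ∀ p (i : Fin k), Wfield φ (Sum.inr (Sum.inl ℓ)) p (Sum.inr (Sum.inl i))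
      = (Pi.single ℓ 1 : Fin k → ℝ) i := by
    intro p i; simp [Wfield, mkM]
  have hWτ : ∀ p, Wfield φ (Sum.inr (Sum.inl ℓ)) p (Sum.inr (Sum.inr (Sum.inr ())))
      = φ p ℓ := by
    intro p; simp [Wfield, mkM]
  -- constancy of coordinates with zero derivative
  have hzero : ∀ idx : MIdxT n k,
      (∀ p, Wfield φ (Sum.inr (Sum.inl ℓ)) p idx = 0) → ∀ t ∈ I, γ t idx = a idx := by
    intro idx h0 t ht
    have hle := Convex.norm_image_sub_le_of_norm_hasDerivWithin_le
      (f := fun u => γ u idx) (f' := fun _ => (0:ℝ)) (s := I) (C := 0)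
      (fun x hx => by
        have h1 := (hproj idx x hx).hasDerivWithinAt (s := I)
        rw [h0 (γ x)] at h1
        exact h1)
      (fun x _ => by simp) (convex_Icc _ _) h0I ht
    have : γ t idx = γ 0 idx := by
      have h' : ‖γ t idx - γ 0 idx‖ ≤ 0 := by simpa using hle
      have := norm_le_zero_iff.mp h'
      linarith [sub_eq_zero.mp this]
    rw [this, hγ0]
  have hv : ∀ t ∈ I, ∀ j, vPart (γ t) j = vPart a j :=
    fun t ht j => hzero (Sum.inl j) (fun p => hWv p j) t ht
  have hw : ∀ t ∈ I, ∀ j, wPart (γ t) j = wPart a j :=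
    fun t ht j => hzero (Sum.inr (Sum.inr (Sum.inl j))) (fun p => hWw p j) t ht
  have hηne : ∀ t ∈ I, ∀ i : Fin k, i ≠ ℓ → etaPart (γ t) i = etaPart a i := by
    intro t ht i hi
    exact hzero (Sum.inr (Sum.inl i))
      (fun p => by rw [hWη p i, Pi.single_eq_of_ne hi]) t ht
  -- η_ℓ coordinate: γ t = a + t
  have hηℓ : ∀ t ∈ I, etaPart (γ t) ℓ = etaPart a ℓ + t := by
    intro t ht
    have hle := Convex.norm_image_sub_le_of_norm_hasDerivWithin_le
      (f := fun u => γ u (Sum.inr (Sum.inl ℓ)) - u) (f' := fun _ => (0:ℝ)) (s := I) (C := 0)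
      (fun x hx => by
        have h1 := ((hproj (Sum.inr (Sum.inl ℓ)) x hx).sub
          (hasDerivAt_id x)).hasDerivWithinAt (s := I)
        rw [hWη (γ x) ℓ, Pi.single_eq_same, sub_self] at h1
        exact h1)
      (fun x _ => by simp) (convex_Icc _ _) h0I ht
    have h' : ‖γ t (Sum.inr (Sum.inl ℓ)) - t - (γ 0 (Sum.inr (Sum.inl ℓ)) - 0)‖ ≤ 0 := by
      simpa using hle
    have h2 := sub_eq_zero.mp (norm_le_zero_iff.mp h')
    have : γ t (Sum.inr (Sum.inl ℓ)) - t = γ 0 (Sum.inr (Sum.inl ℓ)) - 0 := h2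
    rw [hγ0] at this
    simp only [etaPart]
    linarith
  have hη : ∀ t ∈ I, ∀ i : Fin k, etaPart (γ t) i
      = etaPart a i + (if i = ℓ then t else 0) := by
    intro t ht i
    by_cases h : i = ℓ
    · subst h; rw [hηℓ t ht]; simp
    · rw [hηne t ht i h]; simp [h]
  -- the vertical function f
  set f : ℝ → ℝ :=
    fun t => γ t (Sum.inr (Sum.inr (Sum.inr ()))) - a (Sum.inr (Sum.inr (Sum.inr ())))
      - φ a ℓ * t with hfdef
  have hf0 : f 0 = 0 := by simp [hfdef, hγ0]
  have hf' : ∀ t ∈ I, HasDerivWithinAt f (φ (γ t) ℓ - φ a ℓ) I t := by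
    intro t ht
    have h1 := (hproj (Sum.inr (Sum.inr (Sum.inr ()))) t ht).sub_const
      (a (Sum.inr (Sum.inr (Sum.inr ()))))
    have h2 : HasDerivAt (fun u : ℝ => φ a ℓ * u) (φ a ℓ) t := by
      simpa using (hasDerivAt_id t).const_mul (φ a ℓ)
    have h3 := h1.sub h2
    rw [hWτ (γ t)] at h3
    exact h3.hasDerivWithinAt
  have hτeq : ∀ t ∈ I, tauPart (γ t) = tauPart a + φ a ℓ * t + f t := by
    intro t ht; simp only [hfdef, tauPart]; ring
  -- the dPhi formula along the curve
  have hD : ∀ t ∈ I, dPhi hk φ (γ t) a = max |t| (Real.sqrt |f t|) :=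
    fun t ht => dPhi_curve hk φ a (γ t) ℓ t (f t) (hv t ht) (hw t ht) (hη t ht) (hτeq t ht)
  -- the max of D on the interval between 0 and s
  set J : Set ℝ := Set.uIcc 0 s with hJ
  have hIu : Set.uIcc (-δ) δ = I := Set.uIcc_of_le (by linarith)
  have hJI : J ⊆ I := by
    rw [← hIu]
    exact Set.uIcc_subset_uIcc (by rw [hIu]; exact h0I) (by rw [hIu]; exact hsI)
  have hJconv : Convex ℝ J := by
    rw [hJ, Set.uIcc]; exact convex_Icc _ _
  set G : ℝ → ℝ := fun t => max |t| (Real.sqrt |f t|) with hG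
  have hfc : ContinuousOn f I := fun t ht => (hf' t ht).continuousWithinAt
  have hGcont : ContinuousOn G J := by
    refine ContinuousOn.sup continuous_abs.continuousOn ?_
    exact Real.continuous_sqrt.comp_continuousOn
      (continuous_abs.comp_continuousOn (hfc.mono hJI))
  obtain ⟨r0, hr0J, hmax⟩ := isCompact_uIcc.exists_isMaxOn
    ⟨0, Set.left_mem_uIcc⟩ hGcont
  set M : ℝ := G r0 with hM
  have hM0 : 0 ≤ M := (abs_nonneg r0).trans (le_max_left _ _)
  have habs : ∀ t ∈ J, |t| ≤ |s| := by
    intro t ht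
    have ht' : t ∈ Set.uIcc 0 s := ht
    rcases le_total 0 s with h | h
    · rw [Set.uIcc_of_le h] at ht'
      rw [abs_of_nonneg ht'.1, abs_of_nonneg h]; exact ht'.2
    · rw [Set.uIcc_of_ge h] at ht'
      rw [abs_of_nonpos ht'.2, abs_of_nonpos h]
      linarith [ht'.1]
  have hGM : ∀ t ∈ J, G t ≤ M := fun t ht => hmax ht
  -- MVT bound for f
  have hbnd : ∀ t ∈ J, |f t| ≤ C * M * |t| := by
    intro t ht
    have hle := Convex.norm_image_sub_le_of_norm_hasDerivWithin_le
      (f := f) (f' := fun x => φ (γ x) ℓ - φ a ℓ) (s := J) (C := C * M)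
      (fun x hx => (hf' x (hJI hx)).mono hJI)
      (fun x hx => by
        have hcoord : |φ (γ x) ℓ - φ a ℓ| ≤ ‖φ (γ x) - φ a‖ := by
          have h1 : (φ (γ x) - φ a) ℓ = φ (γ x) ℓ - φ a ℓ := by simp
          rw [← h1, EuclideanSpace.norm_eq]
          rw [show |(φ (γ x) - φ a) ℓ| = Real.sqrt (‖(φ (γ x) - φ a) ℓ‖^2) by
            rw [Real.sqrt_sq_eq_abs]; simp]
          apply Real.sqrt_le_sqrt
          exact Finset.single_le_sum (f := fun j => ‖(φ (γ x) - φ a) j‖^2)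
            (fun j _ => sq_nonneg _) (Finset.mem_univ ℓ)
        have h2 : ‖φ (γ x) - φ a‖ ≤ C * dPhi hk φ (γ x) a :=
          hbound (γ x) (hγΩ x (hJI hx)) (hsmall x (hJI hx))
        have h3 : dPhi hk φ (γ x) a ≤ M := by
          rw [hD x (hJI hx)]; exact hGM x hx
        calc ‖φ (γ x) ℓ - φ a ℓ‖ = |φ (γ x) ℓ - φ a ℓ| := Real.norm_eq_abs _
          _ ≤ ‖φ (γ x) - φ a‖ := hcoord
          _ ≤ C * dPhi hk φ (γ x) a := h2
          _ ≤ C * M := mul_le_mul_of_nonneg_left h3 hC.le)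
      hJconv (Set.left_mem_uIcc) ht
    rw [hf0] at hle
    simpa using hle
  -- the key estimate M ≤ max |s| √(C·M·|s|)
  have hMle : M ≤ max |s| (Real.sqrt (C * M * |s|)) := by
    have h1 : M = max |r0| (Real.sqrt |f r0|) := hM
    rw [h1]
    apply max_le_max (habs r0 hr0J)
    apply Real.sqrt_le_sqrt
    calc |f r0| ≤ C * M * |r0| := hbnd r0 hr0J
      _ ≤ C * M * |s| := mul_le_mul_of_nonneg_left (habs r0 hr0J) (by positivity)
  have hsJ : s ∈ J := Set.right_mem_uIcc
  have h1s : |s| ≤ max 1 C * |s| := le_mul_of_one_le_left (abs_nonneg s) (le_max_left 1 C)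
  rw [hD s hsI]
  rcases le_total (Real.sqrt (C * M * |s|)) |s| with hcase | hcase
  · -- M ≤ |s|
    have hMs : M ≤ |s| := hMle.trans (max_le le_rfl hcase)
    exact le_trans ((hGM s hsJ).trans hMs) h1s
  · -- M ≤ √(C·M·|s|)
    have hMs : M ≤ Real.sqrt (C * M * |s|) := hMle.trans (max_le hcase le_rfl)
    have hCMs : (0:ℝ) ≤ C * M * |s| := by positivity
    have hM2 : M * M ≤ C * M * |s| := by
      nlinarith [Real.sq_sqrt hCMs, Real.sqrt_nonneg (C * M * |s|)]
    have hMC : M ≤ C * |s| := by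
      rcases eq_or_lt_of_le hM0 with h0 | h0
      · rw [← h0]; positivity
      · nlinarith
    have hfs : |f s| ≤ (C * |s|)^2 := by
      calc |f s| ≤ C * M * |s| := hbnd s hsJ
        _ ≤ (C * |s|)^2 := by nlinarith [abs_nonneg s]
    apply max_le h1s
    calc Real.sqrt |f s| ≤ Real.sqrt ((C * |s|)^2) := Real.sqrt_le_sqrt hfs
      _ = C * |s| := Real.sqrt_sq (by positivity)
      _ ≤ max 1 C * |s| := mul_le_mul_of_nonneg_right (le_max_right 1 C) (abs_nonneg s)

end HeisGraph
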